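/- Lemma (Gittins index as maximal reward rate). Let η ∈ 𝓜 be a finite stopping time and m ≥ 0. Then V_q(η, m) ≤ βm · E[∫_η^∞ e^{-β(u−η)} q_u du | F_η] a.s. if and only if for every stopping time τ ∈ 𝓜 with τ > η a.s. one has E[∫_η^τ e^{-βu} q_u X_u du | F_η] ≤ βm · E[∫_η^τ e^{-βu} q_u du | F_η] a.s.; that is, the value of the retirement problem collapses to the retirement reward exactly when βm dominates every conditional reward rate E[∫_η^τ e^{-βu} q_u X_u du | F_η] / E[∫_η^τ e^{-βu} q_u du | F_η] over feasible stopping times τ > η. -/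

import Mathlib

open Set Filter Topology MeasureTheory
open scoped ENNReal NNReal

/-- The discounted integral `∫_a^b e^{-β(u - c)} f_u du` along a path, where the (random)
time interval `[a, b)` is cut out of `[0,∞)` by the `ℝ≥0∞`-valued times `a`, `b`,
and `c` is the (random) origin of the discounting. -/
noncomputable def discInt {Ω : Type*} (β : ℝ) (f : ℝ → Ω → ℝ)
    (a b : Ω → ℝ≥0∞) (c : Ω → ℝ) (ω : Ω) : ℝ :=
  ∫ u in Ioi (0:ℝ),
    {u : ℝ | a ω ≤ ENNReal.ofReal u ∧ ENNReal.ofReal u < b ω}.indicator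
      (fun u => Real.exp (-β * (u - c ω)) * f u ω) u

noncomputable def discKer {Ω : Type*} (β : ℝ) (f : ℝ → Ω → ℝ)
    (a b : Ω → ℝ≥0∞) (c : Ω → ℝ) (ω : Ω) : ℝ → ℝ :=
  {u : ℝ | a ω ≤ ENNReal.ofReal u ∧ ENNReal.ofReal u < b ω}.indicator
    (fun u => Real.exp (-β * (u - c ω)) * f u ω)

lemma discInt_eq {Ω : Type*} (β : ℝ) (f : ℝ → Ω → ℝ) (a b : Ω → ℝ≥0∞) (c : Ω → ℝ) (ω : Ω) :
    discInt β f a b c ω = ∫ u in Ioi (0:ℝ), discKer β f a b c ω u := rfl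

lemma integrableOn_expShift {β : ℝ} (hβ : 0 < β) (a c : ℝ) :
    IntegrableOn (fun u => Real.exp (-β * (u - c))) (Ioi a) := by
  have h := (exp_neg_integrableOn_Ioi a hβ).const_mul (Real.exp (β * c))
  refine h.congr (ae_of_all _ fun u => ?_)
  simp only [← Real.exp_add]; ring_nf

lemma integral_expShift {β : ℝ} (hβ : 0 < β) (a c : ℝ) :
    ∫ u in Ioi a, Real.exp (-β * (u - c)) = Real.exp (-β * (a - c)) / β := by
  have hderiv : ∀ x ∈ Ioi a, HasDerivAt (fun u => -Real.exp (-β * (u - c)) / β)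
      (Real.exp (-β * (x - c))) x := by
    intro x _
    have h1 : HasDerivAt (fun u : ℝ => -β * (u - c)) (-β) x := by
      simpa using ((hasDerivAt_id x).sub_const c).const_mul (-β)
    have h2 := (Real.hasDerivAt_exp (-β * (x - c))).comp x h1
    have h3 := (h2.neg).div_const β
    exact h3.congr_deriv (by rw [div_eq_iff hβ.ne']; ring)
  have hcont : ContinuousWithinAt (fun u => -Real.exp (-β * (u - c)) / β) (Ici a) a := by
    exact (((Real.continuous_exp.comp (by fun_prop)).neg.div_const β).continuousWithinAt)
  have htend : Tendsto (fun u => -Real.exp (-β * (u - c)) / β) atTop (𝓝 0) := by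
    have h1 : Tendsto (fun u : ℝ => -β * (u - c)) atTop atBot := by
      have h0 := (tendsto_atTop_add_const_right atTop (-c) tendsto_id).const_mul_atTop hβ
      have h0' := tendsto_neg_atBot_iff.mpr h0
      refine h0'.congr fun x => by simp only [id]; ring
    have h2 := (Real.tendsto_exp_atBot).comp h1
    have h3 := (h2.neg).div_const β
    simpa using h3
  have := integral_Ioi_of_hasDerivAt_of_tendsto hcont hderiv
    (integrableOn_expShift hβ a c) htend
  rw [this]; field_simp; ring

section helpers
set_option linter.unusedSectionVars false
variable {Ω : Type*} [m0 : MeasurableSpace Ω] {β : ℝ} {f : ℝ → Ω → ℝ} {a b : Ω → ℝ≥0∞} {c : Ω → ℝ}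

lemma discKer_nonneg (hf : ∀ t ω, 0 ≤ f t ω) (ω : Ω) (u : ℝ) : 0 ≤ discKer β f a b c ω u := by
  unfold discKer
  exact Set.indicator_nonneg (fun u _ => mul_nonneg (Real.exp_nonneg _) (hf u ω)) u

lemma discInt_nonneg (hf : ∀ t ω, 0 ≤ f t ω) (ω : Ω) : 0 ≤ discInt β f a b c ω := by
  rw [discInt_eq]
  exact integral_nonneg (fun u => discKer_nonneg hf ω u)

lemma discInt_empty {ω : Ω} (h : b ω ≤ a ω) : discInt β f a b c ω = 0 := by
  rw [discInt_eq]
  have : discKer β f a b c ω = fun _ => (0:ℝ) := by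
    funext u
    unfold discKer
    apply Set.indicator_of_notMem
    rintro ⟨h1, h2⟩
    exact absurd (h2.trans_le (h.trans h1)) (lt_irrefl _)
  rw [this]; simp

lemma discInt_shift (ω : Ω) :
    discInt β f a b c ω = Real.exp (β * c ω) * discInt β f a b (fun _ => 0) ω := by
  rw [discInt_eq, discInt_eq, ← integral_const_mul]
  congr 1
  funext u
  unfold discKer
  rw [← Set.indicator_const_mul]
  congr 1
  funext v
  rw [← mul_assoc, ← Real.exp_add]
  ring_nf

lemma measurable_slice (hf : Measurable (Function.uncurry f)) (ω : Ω) :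
    Measurable fun u => f u ω :=
  hf.comp (measurable_id.prodMk measurable_const)

lemma discKer_measurable_u (hf : Measurable (Function.uncurry f)) (ω : Ω) :
    Measurable (discKer β f a b c ω) := by
  unfold discKer
  refine Measurable.indicator ?_ ?_
  · exact (Real.measurable_exp.comp (by fun_prop)).mul (measurable_slice hf ω)
  · exact ENNReal.measurable_ofReal measurableSet_Ico

lemma discKer_integrableOn (hβ : 0 < β) (hf : Measurable (Function.uncurry f)) {C : ℝ}
    (hfC : ∀ t ω, |f t ω| ≤ C) (ω : Ω) :
    IntegrableOn (discKer β f a b c ω) (Ioi (0:ℝ)) := by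
  refine Integrable.mono' ((integrableOn_expShift hβ 0 (c ω)).const_mul C)
    (discKer_measurable_u hf ω).aestronglyMeasurable (ae_of_all _ fun u => ?_)
  unfold discKer
  rw [norm_indicator_eq_indicator_norm]
  refine (Set.indicator_le_self' (fun _ _ => ?_) u).trans ?_
  · positivity
  · simp only [norm_mul, Real.norm_eq_abs, Real.abs_exp]
    have h1 : |f u ω| ≤ C := hfC u ω
    have h2 : (0:ℝ) ≤ Real.exp (-β * (u - c ω)) := Real.exp_nonneg _
    nlinarith [abs_nonneg (f u ω)]

lemma discInt_stronglyMeasurable (hf : Measurable (Function.uncurry f))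
    (ha : Measurable a) (hb : Measurable b) (hc : Measurable c) :
    StronglyMeasurable (discInt β f a b c) := by
  have hH : StronglyMeasurable fun p : Ω × ℝ =>
      ({u : ℝ | a p.1 ≤ ENNReal.ofReal u ∧ ENNReal.ofReal u < b p.1}.indicator
        (fun u => Real.exp (-β * (u - c p.1)) * f u p.1)) p.2 := by
    apply Measurable.stronglyMeasurable
    have hset : MeasurableSet {p : Ω × ℝ | a p.1 ≤ ENNReal.ofReal p.2 ∧ ENNReal.ofReal p.2 < b p.1} := by
      have h1 : Measurable fun p : Ω × ℝ => a p.1 := ha.comp measurable_fst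
      have h2 : Measurable fun p : Ω × ℝ => ENNReal.ofReal p.2 :=
        ENNReal.measurable_ofReal.comp measurable_snd
      have h3 : Measurable fun p : Ω × ℝ => b p.1 := hb.comp measurable_fst
      have h4 : MeasurableSet {p : Ω × ℝ | ENNReal.ofReal p.2 < b p.1} := by
        have := (measurableSet_le h3 h2).compl
        simpa only [Set.compl_setOf, not_le] using this
      exact (measurableSet_le h1 h2).inter h4
    have hfun : Measurable fun p : Ω × ℝ => Real.exp (-β * (p.2 - c p.1)) * f p.2 p.1 := by
      refine Measurable.mul ?_ (hf.comp (measurable_snd.prodMk measurable_fst))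
      exact Real.measurable_exp.comp (by fun_prop)
    have : ∀ p : Ω × ℝ, ({u : ℝ | a p.1 ≤ ENNReal.ofReal u ∧ ENNReal.ofReal u < b p.1}.indicator
        (fun u => Real.exp (-β * (u - c p.1)) * f u p.1)) p.2
        = {p : Ω × ℝ | a p.1 ≤ ENNReal.ofReal p.2 ∧ ENNReal.ofReal p.2 < b p.1}.indicator
          (fun p : Ω × ℝ => Real.exp (-β * (p.2 - c p.1)) * f p.2 p.1) p := by
      intro p
      by_cases h : a p.1 ≤ ENNReal.ofReal p.2 ∧ ENNReal.ofReal p.2 < b p.1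
      · rw [Set.indicator_of_mem (by exact h), Set.indicator_of_mem (by exact h)]
      · rw [Set.indicator_of_notMem (by exact h), Set.indicator_of_notMem (by exact h)]
    simp only [this]
    exact hfun.indicator hset
  exact hH.integral_prod_right'

lemma discInt_le_bound (hβ : 0 < β) (hf : Measurable (Function.uncurry f)) {C : ℝ} (hC0 : 0 ≤ C)
    (h0 : ∀ t ω, 0 ≤ f t ω) (hC : ∀ t ω, f t ω ≤ C) {ω : Ω}
    (hca : ∀ u : ℝ, 0 < u → a ω ≤ ENNReal.ofReal u → c ω ≤ u) :
    discInt β f a b c ω ≤ C / β := by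
  have habs : ∀ t ω, |f t ω| ≤ C := fun t ω => abs_le.mpr ⟨by linarith [h0 t ω], hC t ω⟩
  set D : ℝ → ℝ := fun u => C * (Ici (c ω)).indicator (fun u => Real.exp (-β * (u - c ω))) u with hD
  have hDint : Integrable D := by
    refine Integrable.const_mul ?_ C
    rw [integrable_indicator_iff measurableSet_Ici]
    rw [IntegrableOn, Measure.restrict_congr_set Ioi_ae_eq_Ici.symm]
    exact integrableOn_expShift hβ (c ω) (c ω)
  have hDnonneg : ∀ u, 0 ≤ D u := by
    intro u
    exact mul_nonneg hC0 (Set.indicator_nonneg (fun _ _ => Real.exp_nonneg _) u)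
  have hker_le : ∀ u ∈ Ioi (0:ℝ), discKer β f a b c ω u ≤ D u := by
    intro u hu
    unfold discKer
    by_cases h : a ω ≤ ENNReal.ofReal u ∧ ENNReal.ofReal u < b ω
    · rw [Set.indicator_of_mem (by exact h)]
      have hcu : c ω ≤ u := hca u hu h.1
      rw [hD]
      simp only
      rw [Set.indicator_of_mem (mem_Ici.mpr hcu)]
      have := hC u ω
      have he := Real.exp_nonneg (-β * (u - c ω))
      nlinarith [h0 u ω]
    · rw [Set.indicator_of_notMem (by exact h)]
      exact hDnonneg u
  have step1 : discInt β f a b c ω ≤ ∫ u in Ioi (0:ℝ), D u := by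
    rw [discInt_eq]
    refine setIntegral_mono_on ?_ (hDint.integrableOn) measurableSet_Ioi hker_le
    exact discKer_integrableOn hβ hf habs ω
  have step2 : ∫ u in Ioi (0:ℝ), D u ≤ ∫ u, D u := by
    exact setIntegral_le_integral hDint (ae_of_all _ hDnonneg)
  have step3 : ∫ u, D u = C / β := by
    rw [hD]
    simp only
    rw [integral_const_mul, integral_indicator measurableSet_Ici,
      integral_Ici_eq_integral_Ioi, integral_expShift hβ (c ω) (c ω)]
    simp [div_eq_mul_inv]
  linarith

lemma discInt_split (hβ : 0 < β) (hf : Measurable (Function.uncurry f)) {C : ℝ}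
    (habs : ∀ t ω, |f t ω| ≤ C) {b' : Ω → ℝ≥0∞} {ω : Ω} (hab : a ω ≤ b' ω) :
    discInt β f a (fun _ => (⊤:ℝ≥0∞)) c ω
      = discInt β f a b' c ω + discInt β f b' (fun _ => (⊤:ℝ≥0∞)) c ω := by
  have h1 := discKer_integrableOn (a := a) (b := b') (c := c) hβ hf habs ω
  have h2 := discKer_integrableOn (a := b') (b := fun _ => (⊤:ℝ≥0∞)) (c := c) hβ hf habs ω
  rw [discInt_eq, discInt_eq, discInt_eq, ← integral_add h1 h2]
  congr 1
  funext u
  unfold discKer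
  simp only [Set.indicator_apply, Set.mem_setOf_eq, ENNReal.ofReal_lt_top, and_true]
  by_cases h1 : a ω ≤ ENNReal.ofReal u
  · by_cases h2 : ENNReal.ofReal u < b' ω
    · simp [h1, h2, not_le.mpr h2]
    · simp [h1, h2, not_lt.mp h2]
  · have h3 : ¬ b' ω ≤ ENNReal.ofReal u := fun h => h1 (hab.trans h)
    simp [h1, h3]
end helpers

lemma meas_of_coe {Ω : Type*} {m : MeasurableSpace Ω} {η : Ω → ℝ≥0∞}
    (h : Measurable[m] (fun ω => (η ω : WithTop ℝ≥0∞))) : Measurable[m] η :=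
  (WithTop.measurable_untopD (0:ℝ≥0∞)).comp h

lemma isStoppingTime_piecewise {Ω : Type*} {m0 : MeasurableSpace Ω} {F : Filtration ℝ≥0∞ m0}
    {τ₁ τ₂ : Ω → ℝ≥0∞} (hτ₁ : IsStoppingTime F (fun ω => (τ₁ ω : WithTop ℝ≥0∞)))
    (hτ₂ : IsStoppingTime F (fun ω => (τ₂ ω : WithTop ℝ≥0∞))) (A : Set Ω)
    [∀ j, Decidable (j ∈ A)]
    (hA₁ : MeasurableSet[hτ₁.measurableSpace] A) (hA₂ : MeasurableSet[hτ₂.measurableSpace] A) :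
    IsStoppingTime F (fun ω => (A.piecewise τ₁ τ₂ ω : WithTop ℝ≥0∞)) := by
  intro t
  change MeasurableSet[F t] {ω | (A.piecewise τ₁ τ₂ ω : WithTop ℝ≥0∞) ≤ (t : WithTop ℝ≥0∞)}
  have heq : {ω | (A.piecewise τ₁ τ₂ ω : WithTop ℝ≥0∞) ≤ (t : WithTop ℝ≥0∞)}
      = (A ∩ {ω | (τ₁ ω : WithTop ℝ≥0∞) ≤ (t : WithTop ℝ≥0∞)})
        ∪ (Aᶜ ∩ {ω | (τ₂ ω : WithTop ℝ≥0∞) ≤ (t : WithTop ℝ≥0∞)}) := by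
    ext ω
    by_cases h : ω ∈ A
    · simp [Set.piecewise_eq_of_mem _ _ _ h, h]
    · simp [Set.piecewise_eq_of_notMem _ _ _ h, h]
  rw [heq]
  exact (((hτ₁.measurableSet A).mp hA₁).2 t).union (((hτ₂.measurableSet Aᶜ).mp hA₂.compl).2 t)

lemma discInt_congr_pt {Ω : Type*} {β : ℝ} {f : ℝ → Ω → ℝ} {a b a' b' : Ω → ℝ≥0∞} {c c' : Ω → ℝ}
    {ω : Ω} (ha : a ω = a' ω) (hb : b ω = b' ω) (hc : c ω = c' ω) :
    discInt β f a b c ω = discInt β f a' b' c' ω := by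
  unfold discInt; rw [ha, hb, hc]

theorem gittins_index_maximal_reward_rate
    {Ω : Type*} {m0 : MeasurableSpace Ω} {P : MeasureTheory.Measure Ω}
    [IsProbabilityMeasure P]
    (β : ℝ) (hβ : 0 < β)
    (F : Filtration ℝ≥0∞ m0)
    -- quasi-left-continuity of the filtration
    (hFqlc : ∀ (τn : ℕ → Ω → ℝ≥0∞) (τ : Ω → ℝ≥0∞) (hτn : ∀ n, IsStoppingTime F (fun ω => (τn n ω : WithTop ℝ≥0∞)))
      (hτ : IsStoppingTime F (fun ω => (τ ω : WithTop ℝ≥0∞))), (∀ ω, Monotone fun n => τn n ω) →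
      (∀ ω, Tendsto (fun n => τn n ω) atTop (𝓝 (τ ω))) →
      (⨆ n, (hτn n).measurableSpace) = hτ.measurableSpace)
    (𝓜 : Ω → Set ℝ≥0∞)
    (h𝓜closed : ∀ ω, IsClosed (𝓜 ω)) (h𝓜zero : ∀ ω, 0 ∈ 𝓜 ω) (h𝓜top : ∀ ω, ∞ ∈ 𝓜 ω)
    -- the reward rate process
    (X : ℝ → Ω → ℝ)
    (hXnonneg : ∀ t ω, 0 ≤ X t ω)
    (hXmeas : Measurable (Function.uncurry X))
    (hXadapted : ∀ t : ℝ, 0 ≤ t → StronglyMeasurable[F (ENNReal.ofReal t)] (X t))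
    (hXint : ∫⁻ ω, (∫⁻ t in Ioi (0:ℝ), ENNReal.ofReal (Real.exp (-β * t) * X t ω)) ∂P ≠ ∞)
    -- the discount weight process
    (q : ℝ → Ω → ℝ)
    (hqmeas : Measurable (Function.uncurry q))
    (hqadapted : ∀ t : ℝ, 0 ≤ t → StronglyMeasurable[F (ENNReal.ofReal t)] (q t))
    (hqrc : ∀ ω, ∀ t : ℝ, 0 ≤ t → ContinuousWithinAt (fun u => q u ω) (Ici t) t)
    (hqanti : ∀ ω, AntitoneOn (fun u => q u ω) (Ici (0:ℝ)))
    (hqnonneg : ∀ t ω, 0 ≤ q t ω)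
    (hqbdd : ∃ C : ℝ, ∀ t ω, q t ω ≤ C)
    -- the finite feasible stopping time `η` and retirement level `m`
    (η : Ω → ℝ≥0∞) (hη : IsStoppingTime F (fun ω => (η ω : WithTop ℝ≥0∞)))
    (hηfin : ∀ᵐ ω ∂P, η ω < ∞) (hη𝓜 : ∀ᵐ ω ∂P, η ω ∈ 𝓜 ω)
    (m : ℝ) (hm : 0 ≤ m)
    -- `V` is the value of the restricted retirement problem `V_q(η, m)`
    (V : Ω → ℝ)
    (hVmeas : StronglyMeasurable[hη.measurableSpace] V)
    (hVdom : ∀ (τ : Ω → ℝ≥0∞), IsStoppingTime F (fun ω => (τ ω : WithTop ℝ≥0∞)) →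
      (∀ᵐ ω ∂P, τ ω ∈ 𝓜 ω ∧ η ω ≤ τ ω) →
      P[(fun ω => discInt β (fun u ω' => q u ω' * X u ω') η τ (fun ω' => (η ω').toReal) ω
          + β * m * discInt β q τ (fun _ => ∞) (fun ω' => (η ω').toReal) ω)
        | hη.measurableSpace] ≤ᵐ[P] V)
    (hVleast : ∀ U : Ω → ℝ, StronglyMeasurable[hη.measurableSpace] U →
      (∀ (τ : Ω → ℝ≥0∞), IsStoppingTime F (fun ω => (τ ω : WithTop ℝ≥0∞)) →
        (∀ᵐ ω ∂P, τ ω ∈ 𝓜 ω ∧ η ω ≤ τ ω) →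
        P[(fun ω => discInt β (fun u ω' => q u ω' * X u ω') η τ (fun ω' => (η ω').toReal) ω
            + β * m * discInt β q τ (fun _ => ∞) (fun ω' => (η ω').toReal) ω)
          | hη.measurableSpace] ≤ᵐ[P] U) →
      V ≤ᵐ[P] U) :
    -- the retirement value collapses iff `βm` dominates every conditional reward rate
    (V ≤ᵐ[P]
        fun ω => β * m *
          (P[(fun ω' => discInt β q η (fun _ => ∞) (fun ω' => (η ω').toReal) ω')
            | hη.measurableSpace]) ω) ↔
      (∀ (τ : Ω → ℝ≥0∞), IsStoppingTime F (fun ω => (τ ω : WithTop ℝ≥0∞)) →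
        (∀ᵐ ω ∂P, τ ω ∈ 𝓜 ω ∧ η ω < τ ω) →
        (P[(fun ω => discInt β (fun u ω' => q u ω' * X u ω') η τ (fun _ => 0) ω)
            | hη.measurableSpace]) ≤ᵐ[P]
          fun ω => β * m *
            (P[(fun ω' => discInt β q η τ (fun _ => 0) ω') | hη.measurableSpace]) ω) := by
  classical
  obtain ⟨C, hC⟩ := hqbdd
  have hΩ : Nonempty Ω := by
    by_contra h
    rw [not_nonempty_iff] at h
    have h1 := measure_univ (μ := P)
    rw [Set.univ_eq_empty_iff.mpr h, measure_empty] at h1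
    exact zero_ne_one h1
  obtain ⟨ω0⟩ := hΩ
  have hC0 : 0 ≤ C := le_trans (hqnonneg 0 ω0) (hC 0 ω0)
  set qX : ℝ → Ω → ℝ := fun u ω => q u ω * X u ω with hqXdef
  have hqXmeas : Measurable (Function.uncurry qX) := hqmeas.mul hXmeas
  have hqXnn : ∀ t ω, 0 ≤ qX t ω := fun t ω => mul_nonneg (hqnonneg t ω) (hXnonneg t ω)
  have habsq : ∀ t ω, |q t ω| ≤ C := fun t ω => abs_le.mpr ⟨by linarith [hqnonneg t ω], hC t ω⟩
  have hmη : hη.measurableSpace ≤ m0 := hη.measurableSpace_le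
  have hηmeas : Measurable η := meas_of_coe (hη.measurable.mono hmη le_rfl)
  set cη : Ω → ℝ := fun ω' => (η ω').toReal with hcηdef
  have hcηmeas : Measurable cη := hηmeas.ennreal_toReal
  set e : Ω → ℝ := fun ω => Real.exp (β * cη ω) with hedef
  have he_sm : StronglyMeasurable[hη.measurableSpace] e :=
    (Real.measurable_exp.comp (((meas_of_coe hη.measurable).ennreal_toReal).const_mul β)).stronglyMeasurable
  have he_meas : Measurable e := Real.measurable_exp.comp (hcηmeas.const_mul β)
  have he_pos : ∀ ω, 0 < e ω := fun ω => Real.exp_pos _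
  set L : Ω → ℝ≥0∞ := fun ω => ∫⁻ t in Ioi (0:ℝ), ENNReal.ofReal (Real.exp (-β * t) * X t ω)
    with hLdef
  have hLmeas : Measurable L := by
    have : Measurable fun p : Ω × ℝ => ENNReal.ofReal (Real.exp (-β * p.2) * X p.2 p.1) := by
      refine ENNReal.measurable_ofReal.comp ?_
      exact ((Real.measurable_exp.comp (by fun_prop)).mul
        (hXmeas.comp (measurable_snd.prodMk measurable_fst)))
    exact this.lintegral_prod_right'
  have hLfin : ∀ᵐ ω ∂P, L ω < ∞ := ae_lt_top hLmeas hXint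
  have hLint : Integrable (fun ω => C * (L ω).toReal) P :=
    (integrable_toReal_of_lintegral_ne_top hLmeas.aemeasurable hXint).const_mul C
  -- measurability of the various discounted integrals
  have hdm : ∀ (g : ℝ → Ω → ℝ), Measurable (Function.uncurry g) →
      ∀ (aσ bσ : Ω → ℝ≥0∞) (cσ : Ω → ℝ), Measurable aσ → Measurable bσ → Measurable cσ →
      AEStronglyMeasurable (discInt β g aσ bσ cσ) P :=
    fun g hg aσ bσ cσ ha hb hc => (discInt_stronglyMeasurable hg ha hb hc).aestronglyMeasurable
  -- integrability of `q`-type discounted integrals with origin `η`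
  have hqIntOrigin : ∀ (aσ bσ : Ω → ℝ≥0∞), Measurable aσ → Measurable bσ →
      (∀ᵐ ω ∂P, η ω ≤ aσ ω) → Integrable (discInt β q aσ bσ cη) P := by
    intro aσ bσ ha hb hle
    refine Integrable.mono' (integrable_const (C / β)) (hdm q hqmeas _ _ _ ha hb hcηmeas) ?_
    filter_upwards [hle] with ω hω
    rw [Real.norm_eq_abs, abs_of_nonneg (discInt_nonneg hqnonneg ω)]
    refine discInt_le_bound hβ hqmeas hC0 hqnonneg hC ?_
    intro u hu hau
    exact ENNReal.toReal_le_of_le_ofReal hu.le (le_trans hω hau)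
  -- integrability of `q`-type discounted integrals with origin `0`
  have hqInt0 : ∀ (aσ bσ : Ω → ℝ≥0∞), Measurable aσ → Measurable bσ →
      Integrable (discInt β q aσ bσ (fun _ => (0:ℝ))) P := by
    intro aσ bσ ha hb
    refine Integrable.mono' (integrable_const (C / β))
      (hdm q hqmeas _ _ _ ha hb measurable_const) (ae_of_all _ fun ω => ?_)
    rw [Real.norm_eq_abs, abs_of_nonneg (discInt_nonneg hqnonneg ω)]
    exact discInt_le_bound hβ hqmeas hC0 hqnonneg hC (fun u hu _ => hu.le)
  -- integrability of the reward integral with origin `0`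
  have hB1int : ∀ (bσ : Ω → ℝ≥0∞), Measurable bσ →
      Integrable (discInt β qX η bσ (fun _ => (0:ℝ))) P := by
    intro bσ hb
    refine Integrable.mono' hLint (hdm qX hqXmeas _ _ _ hηmeas hb measurable_const) ?_
    filter_upwards [hLfin] with ω hω
    rw [discInt_eq]
    refine le_trans (norm_integral_le_lintegral_norm _) ?_
    have hle : (∫⁻ u in Ioi (0:ℝ), ENNReal.ofReal ‖discKer β qX η bσ (fun _ => (0:ℝ)) ω u‖)
        ≤ ENNReal.ofReal C * L ω := by
      rw [hLdef]
      simp only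
      rw [← lintegral_const_mul' _ _ ENNReal.ofReal_ne_top]
      refine lintegral_mono fun u => ?_
      rw [← ENNReal.ofReal_mul hC0]
      apply ENNReal.ofReal_le_ofReal
      unfold discKer
      rw [norm_indicator_eq_indicator_norm]
      refine (Set.indicator_le_self' (fun _ _ => by positivity) u).trans ?_
      simp only [norm_mul, Real.norm_eq_abs, Real.abs_exp, sub_zero]
      have h1 : |qX u ω| = q u ω * X u ω := abs_of_nonneg (hqXnn u ω)
      rw [h1]
      have h2 := Real.exp_nonneg (-β * u)
      have h3 := hC u ω
      have h4 := hXnonneg u ω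
      have h5 := hqnonneg u ω
      have h6 : 0 ≤ (C - q u ω) * (Real.exp (-β * u) * X u ω) :=
        mul_nonneg (by linarith) (mul_nonneg h2 h4)
      nlinarith [h6]
    refine le_trans (ENNReal.toReal_mono ?_ hle) ?_
    · exact ENNReal.mul_ne_top ENNReal.ofReal_ne_top hω.ne
    · rw [ENNReal.toReal_mul, ENNReal.toReal_ofReal hC0]
  
  have hRnonneg : ∀ ω, 0 ≤ discInt β q η (fun _ => (⊤:ℝ≥0∞)) cη ω :=
    discInt_nonneg hqnonneg
  constructor
  · -- forward direction
    intro hcol τ hτ hτp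
    have hτmeas : Measurable τ := meas_of_coe (hτ.measurable.mono hτ.measurableSpace_le le_rfl)
    have key : ∀ n : ℕ, ∀ᵐ ω ∂P, (η ω ≤ (n:ℝ≥0∞) ∧ η ω ≤ τ ω) →
        (P[discInt β qX η τ (fun _ => (0:ℝ))|hη.measurableSpace]) ω
          ≤ β * m * (P[discInt β q η τ (fun _ => (0:ℝ))|hη.measurableSpace]) ω := by
      intro n
      set A : Set Ω := {ω | η ω ≤ (n:ℝ≥0∞)} ∩ {ω | η ω ≤ τ ω} with hAdef
      have hAη : MeasurableSet[hη.measurableSpace] A := by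
        refine MeasurableSet.inter ?_
          (by simpa only [WithTop.coe_le_coe] using hη.measurableSet_le_stopping_time hτ)
        exact (meas_of_coe hη.measurable) measurableSet_Iic
      have hAτ : MeasurableSet[hτ.measurableSpace] A := by
        have h1 : MeasurableSet[hη.measurableSpace] {ω | η ω ≤ (n:ℝ≥0∞)} :=
          (meas_of_coe hη.measurable) measurableSet_Iic
        have h2 := IsStoppingTime.measurableSet_inter_le hη hτ _ h1
        simp only [WithTop.coe_le_coe] at h2
        exact (IsStoppingTime.measurableSpace_mono _ hτ (fun ω => min_le_right _ _)) _ h2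
      set σn : Ω → ℝ≥0∞ := A.piecewise τ η with hσdef
      have hσst : IsStoppingTime F (fun ω => (σn ω : WithTop ℝ≥0∞)) := by
        rw [hσdef]; exact isStoppingTime_piecewise hτ hη A hAτ hAη
      have hσmeas : Measurable σn := meas_of_coe (hσst.measurable.mono hσst.measurableSpace_le le_rfl)
      have hησn : ∀ ω, η ω ≤ σn ω := by
        intro ω
        by_cases h : ω ∈ A
        · rw [hσdef, Set.piecewise_eq_of_mem _ _ _ h]; exact h.2
        · rw [hσdef, Set.piecewise_eq_of_notMem _ _ _ h]
      have hσp : ∀ᵐ ω ∂P, σn ω ∈ 𝓜 ω ∧ η ω ≤ σn ω := by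
        filter_upwards [hτp, hη𝓜] with ω h1 h2
        refine ⟨?_, hησn ω⟩
        by_cases h : ω ∈ A
        · rw [hσdef, Set.piecewise_eq_of_mem _ _ _ h]; exact h1.1
        · rw [hσdef, Set.piecewise_eq_of_notMem _ _ _ h]; exact h2
      have hVd := hVdom σn hσst hσp
      set φ : Ω → ℝ := A.indicator e with hφdef
      have hφ_sm : StronglyMeasurable[hη.measurableSpace] φ := he_sm.indicator hAη
      have hφmeas : Measurable φ := he_meas.indicator (hmη _ hAη)
      have hφbdd : ∀ ω, ‖φ ω‖ ≤ Real.exp (β * n) := by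
        intro ω
        rw [hφdef]
        by_cases h : ω ∈ A
        · rw [Set.indicator_of_mem h, Real.norm_eq_abs, abs_of_pos (he_pos ω)]
          rw [hedef]
          simp only
          apply Real.exp_le_exp.mpr
          have h1 : cη ω ≤ (n:ℝ) := by
            rw [hcηdef]
            simp only
            have h2 := ENNReal.toReal_mono (by simp) h.1
            simpa using h2
          nlinarith
        · rw [Set.indicator_of_notMem h]
          simp [Real.exp_nonneg]
      have hA1eq : (fun ω => discInt β qX η σn cη ω)
          = fun ω => φ ω * discInt β qX η τ (fun _ => (0:ℝ)) ω := by
        funext ω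
        by_cases h : ω ∈ A
        · rw [hφdef, Set.indicator_of_mem h,
            discInt_congr_pt (a' := η) (b' := τ) (c' := cη) rfl
              (by rw [hσdef, Set.piecewise_eq_of_mem _ _ _ h]) rfl]
          exact discInt_shift ω
        · rw [hφdef, Set.indicator_of_notMem h, zero_mul]
          refine discInt_empty ?_
          rw [hσdef, Set.piecewise_eq_of_notMem _ _ _ h]
      have hGeq : (fun ω => discInt β q η σn cη ω)
          = fun ω => φ ω * discInt β q η τ (fun _ => (0:ℝ)) ω := by
        funext ω
        by_cases h : ω ∈ A
        · rw [hφdef, Set.indicator_of_mem h,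
            discInt_congr_pt (a' := η) (b' := τ) (c' := cη) rfl
              (by rw [hσdef, Set.piecewise_eq_of_mem _ _ _ h]) rfl]
          exact discInt_shift ω
        · rw [hφdef, Set.indicator_of_notMem h, zero_mul]
          refine discInt_empty ?_
          rw [hσdef, Set.piecewise_eq_of_notMem _ _ _ h]
      have hB1τ := hB1int τ hτmeas
      have hB2τ := hqInt0 η τ hηmeas hτmeas
      have hA1σ : Integrable (fun ω => discInt β qX η σn cη ω) P := by
        rw [hA1eq]
        exact hB1τ.bdd_mul hφmeas.aestronglyMeasurable (ae_of_all _ hφbdd)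
      have hGσ : Integrable (discInt β q η σn cη) P :=
        hqIntOrigin η σn hηmeas hσmeas (ae_of_all _ fun _ => le_rfl)
      have hA2σ : Integrable (discInt β q σn (fun _ => (⊤:ℝ≥0∞)) cη) P :=
        hqIntOrigin σn _ hσmeas measurable_const (ae_of_all _ hησn)
      have hc1 : P[(fun ω => discInt β qX η σn cη ω
            + β * m * discInt β q σn (fun _ => (⊤:ℝ≥0∞)) cη ω)|hη.measurableSpace]
          =ᵐ[P] (P[(fun ω => discInt β qX η σn cη ω)|hη.measurableSpace])
            + (β*m) • (P[discInt β q σn (fun _ => (⊤:ℝ≥0∞)) cη|hη.measurableSpace]) := by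
        have hsum : (fun ω => discInt β qX η σn cη ω
              + β * m * discInt β q σn (fun _ => (⊤:ℝ≥0∞)) cη ω)
            = (fun ω => discInt β qX η σn cη ω)
              + (β*m) • (discInt β q σn (fun _ => (⊤:ℝ≥0∞)) cη) := by
          funext ω; simp [Pi.add_apply, smul_eq_mul]
        rw [hsum]
        have hsm : Integrable ((β*m) • (discInt β q σn (fun _ => (⊤:ℝ≥0∞)) cη)) P := hA2σ.smul (β*m)
        refine (condExp_add hA1σ hsm _).trans ?_
        exact EventuallyEq.add EventuallyEq.rfl (condExp_smul (β*m) _ _)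
      have hc2 : P[discInt β q η (fun _ => (⊤:ℝ≥0∞)) cη|hη.measurableSpace]
          =ᵐ[P] (P[discInt β q η σn cη|hη.measurableSpace])
            + (P[discInt β q σn (fun _ => (⊤:ℝ≥0∞)) cη|hη.measurableSpace]) := by
        have hsp : discInt β q η (fun _ => (⊤:ℝ≥0∞)) cη
            = (discInt β q η σn cη) + (discInt β q σn (fun _ => (⊤:ℝ≥0∞)) cη) := by
          funext ω; exact discInt_split hβ hqmeas habsq (hησn ω)
        rw [hsp]
        exact condExp_add hGσ hA2σ _
      have hc3 : P[(fun ω => discInt β qX η σn cη ω)|hη.measurableSpace]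
          =ᵐ[P] fun ω => φ ω * (P[discInt β qX η τ (fun _ => (0:ℝ))|hη.measurableSpace]) ω := by
        rw [hA1eq]
        have hint : Integrable (φ * discInt β qX η τ (fun _ => (0:ℝ))) P :=
          hB1τ.bdd_mul hφmeas.aestronglyMeasurable (ae_of_all _ hφbdd)
        exact condExp_mul_of_stronglyMeasurable_left hφ_sm hint hB1τ
      have hc4 : P[discInt β q η σn cη|hη.measurableSpace]
          =ᵐ[P] fun ω => φ ω * (P[discInt β q η τ (fun _ => (0:ℝ))|hη.measurableSpace]) ω := by
        rw [show discInt β q η σn cη = fun ω => discInt β q η σn cη ω from rfl, hGeq]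
        have hint : Integrable (φ * discInt β q η τ (fun _ => (0:ℝ))) P :=
          hB2τ.bdd_mul hφmeas.aestronglyMeasurable (ae_of_all _ hφbdd)
        exact condExp_mul_of_stronglyMeasurable_left hφ_sm hint hB2τ
      filter_upwards [hVd, hcol, hc1, hc2, hc3, hc4] with ω h1 h2 h3 h4 h5 h6 hmem
      have hA : ω ∈ A := by rw [hAdef]; exact ⟨hmem.1, hmem.2⟩
      have hφω : φ ω = e ω := by rw [hφdef]; exact Set.indicator_of_mem hA e
      rw [h3] at h1
      simp only [Pi.add_apply, Pi.smul_apply, smul_eq_mul] at h1 h4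
      rw [h5, hφω] at h1
      rw [h4, h6, hφω] at h2
      set x := (P[discInt β qX η τ (fun _ => (0:ℝ))|hη.measurableSpace]) ω
      set y := (P[discInt β q η τ (fun _ => (0:ℝ))|hη.measurableSpace]) ω
      have hex : e ω * x ≤ e ω * (β * m * y) := by nlinarith [h1, h2]
      exact le_of_mul_le_mul_left hex (he_pos ω)
    have hae := ae_all_iff.mpr key
    show P[discInt β qX η τ (fun _ => (0:ℝ))|hη.measurableSpace]
        ≤ᵐ[P] fun ω => β * m * (P[discInt β q η τ (fun _ => (0:ℝ))|hη.measurableSpace]) ω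
    filter_upwards [hae, hτp, hηfin] with ω hω h1 h2
    obtain ⟨n, hn⟩ := ENNReal.exists_nat_gt h2.ne
    exact hω n ⟨hn.le, h1.2.le⟩
  · -- backward direction
    intro hrate
    refine hVleast _ (stronglyMeasurable_condExp.const_mul (β*m)) ?_
    intro τ hτ hτp
    have hτmeas : Measurable τ := meas_of_coe (hτ.measurable.mono hτ.measurableSpace_le le_rfl)
    have hA2τ : Integrable (discInt β q τ (fun _ => (⊤:ℝ≥0∞)) cη) P :=
      hqIntOrigin τ _ hτmeas measurable_const (hτp.mono fun ω h => h.2)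
    have hGτ : Integrable (discInt β q η τ cη) P :=
      hqIntOrigin η τ hηmeas hτmeas (ae_of_all _ fun _ => le_rfl)
    have hB1τ := hB1int τ hτmeas
    have hB2τ := hqInt0 η τ hηmeas hτmeas
    have hRcond : P[discInt β q η (fun _ => (⊤:ℝ≥0∞)) cη|hη.measurableSpace]
        =ᵐ[P] (P[discInt β q η τ cη|hη.measurableSpace])
          + (P[discInt β q τ (fun _ => (⊤:ℝ≥0∞)) cη|hη.measurableSpace]) := by
      have hsp : discInt β q η (fun _ => (⊤:ℝ≥0∞)) cη
          =ᵐ[P] (discInt β q η τ cη) + (discInt β q τ (fun _ => (⊤:ℝ≥0∞)) cη) := by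
        filter_upwards [hτp] with ω h
        exact discInt_split hβ hqmeas habsq h.2
      exact (condExp_congr_ae hsp).trans (condExp_add hGτ hA2τ _)
    by_cases hA1i : Integrable (fun ω => discInt β qX η τ cη ω) P
    · -- the reward part is integrable
      set B : Set Ω := {ω | η ω < τ ω} with hBdef
      have hBc : B = {ω | τ ω ≤ η ω}ᶜ := by
        rw [hBdef]; ext ω; simp [not_le]
      have hBη : MeasurableSet[hη.measurableSpace] B := by
        rw [hBc]; exact (by simpa only [WithTop.coe_le_coe] using IsStoppingTime.measurableSet_stopping_time_le hτ hη : MeasurableSet[hη.measurableSpace] {ω | τ ω ≤ η ω}).compl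
      have hBτ : MeasurableSet[hτ.measurableSpace] B := by
        rw [hBc]; exact (by simpa only [WithTop.coe_le_coe] using IsStoppingTime.measurableSet_le_stopping_time hτ hη : MeasurableSet[hτ.measurableSpace] {ω | τ ω ≤ η ω}).compl
      have hB2 : MeasurableSet[(isStoppingTime_const F (⊤:ℝ≥0∞)).measurableSpace] B := by
        rw [IsStoppingTime.measurableSpace_const, hBc]
        have h1 : Measurable[F ⊤] τ := meas_of_coe (hτ.measurable_of_le fun _ => WithTop.coe_le_coe.mpr le_top)
        have h2 : Measurable[F ⊤] η := meas_of_coe (hη.measurable_of_le fun _ => WithTop.coe_le_coe.mpr le_top)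
        exact (measurableSet_le h1 h2).compl
      set σ : Ω → ℝ≥0∞ := B.piecewise τ (fun _ => (⊤:ℝ≥0∞)) with hσdef
      have hσst : IsStoppingTime F (fun ω => (σ ω : WithTop ℝ≥0∞)) := by
        rw [hσdef]
        exact isStoppingTime_piecewise hτ (isStoppingTime_const F (⊤:ℝ≥0∞)) B hBτ hB2
      have hσmeas : Measurable σ := meas_of_coe (hσst.measurable.mono hσst.measurableSpace_le le_rfl)
      have hσp : ∀ᵐ ω ∂P, σ ω ∈ 𝓜 ω ∧ η ω < σ ω := by
        filter_upwards [hτp, hηfin] with ω h1 h2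
        by_cases h : ω ∈ B
        · rw [hσdef, Set.piecewise_eq_of_mem _ _ _ h]
          exact ⟨h1.1, h⟩
        · rw [hσdef, Set.piecewise_eq_of_notMem _ _ _ h]
          exact ⟨h𝓜top ω, h2⟩
      have hr := hrate σ hσst hσp
      have hB1eq : discInt β qX η τ (fun _ => (0:ℝ))
          =ᵐ[P] B.indicator (discInt β qX η σ (fun _ => (0:ℝ))) := by
        filter_upwards [hτp] with ω h
        by_cases hb : ω ∈ B
        · rw [Set.indicator_of_mem hb]
          refine discInt_congr_pt rfl ?_ rfl
          rw [hσdef, Set.piecewise_eq_of_mem _ _ _ hb]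
        · rw [Set.indicator_of_notMem hb]
          exact discInt_empty (not_lt.mp hb)
      have hB2eq : discInt β q η τ (fun _ => (0:ℝ))
          =ᵐ[P] B.indicator (discInt β q η σ (fun _ => (0:ℝ))) := by
        filter_upwards [hτp] with ω h
        by_cases hb : ω ∈ B
        · rw [Set.indicator_of_mem hb]
          refine discInt_congr_pt rfl ?_ rfl
          rw [hσdef, Set.piecewise_eq_of_mem _ _ _ hb]
        · rw [Set.indicator_of_notMem hb]
          exact discInt_empty (not_lt.mp hb)
      have hc5 : P[discInt β qX η τ (fun _ => (0:ℝ))|hη.measurableSpace]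
          =ᵐ[P] B.indicator (P[discInt β qX η σ (fun _ => (0:ℝ))|hη.measurableSpace]) :=
        (condExp_congr_ae hB1eq).trans (condExp_indicator (hB1int σ hσmeas) hBη)
      have hc6 : P[discInt β q η τ (fun _ => (0:ℝ))|hη.measurableSpace]
          =ᵐ[P] B.indicator (P[discInt β q η σ (fun _ => (0:ℝ))|hη.measurableSpace]) :=
        (condExp_congr_ae hB2eq).trans (condExp_indicator (hqInt0 η σ hηmeas hσmeas) hBη)
      have hkey : P[discInt β qX η τ (fun _ => (0:ℝ))|hη.measurableSpace]
          ≤ᵐ[P] fun ω => β * m *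
            (P[discInt β q η τ (fun _ => (0:ℝ))|hη.measurableSpace]) ω := by
        filter_upwards [hr, hc5, hc6] with ω h1 h2 h3
        rw [h2, h3]
        by_cases hb : ω ∈ B
        · rw [Set.indicator_of_mem hb, Set.indicator_of_mem hb]
          exact h1
        · rw [Set.indicator_of_notMem hb, Set.indicator_of_notMem hb]
          simp
      have hA1eqf : (fun ω => discInt β qX η τ cη ω)
          = fun ω => e ω * discInt β qX η τ (fun _ => (0:ℝ)) ω :=
        funext fun ω => discInt_shift ω
      have hGeqf : discInt β q η τ cη
          = fun ω => e ω * discInt β q η τ (fun _ => (0:ℝ)) ω :=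
        funext fun ω => discInt_shift ω
      have hc7 : P[(fun ω => discInt β qX η τ cη ω)|hη.measurableSpace]
          =ᵐ[P] fun ω => e ω * (P[discInt β qX η τ (fun _ => (0:ℝ))|hη.measurableSpace]) ω := by
        rw [hA1eqf]
        have hint : Integrable (fun ω => e ω * discInt β qX η τ (fun _ => (0:ℝ)) ω) P := by
          rw [← hA1eqf]; exact hA1i
        exact condExp_mul_of_stronglyMeasurable_left he_sm hint hB1τ
      have hc8 : P[discInt β q η τ cη|hη.measurableSpace]
          =ᵐ[P] fun ω => e ω * (P[discInt β q η τ (fun _ => (0:ℝ))|hη.measurableSpace]) ω := by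
        rw [hGeqf]
        have hint : Integrable (fun ω => e ω * discInt β q η τ (fun _ => (0:ℝ)) ω) P := by
          rw [← hGeqf]; exact hGτ
        exact condExp_mul_of_stronglyMeasurable_left he_sm hint hB2τ
      have hsum : (fun ω => discInt β qX η τ cη ω
            + β * m * discInt β q τ (fun _ => (⊤:ℝ≥0∞)) cη ω)
          = (fun ω => discInt β qX η τ cη ω)
            + (β*m) • (discInt β q τ (fun _ => (⊤:ℝ≥0∞)) cη) := by
        funext ω; simp [Pi.add_apply, smul_eq_mul]
      have hc9 : P[(fun ω => discInt β qX η τ cη ω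
            + β * m * discInt β q τ (fun _ => (⊤:ℝ≥0∞)) cη ω)|hη.measurableSpace]
          =ᵐ[P] (P[(fun ω => discInt β qX η τ cη ω)|hη.measurableSpace])
            + (β*m) • (P[discInt β q τ (fun _ => (⊤:ℝ≥0∞)) cη|hη.measurableSpace]) := by
        rw [hsum]
        refine (condExp_add hA1i (hA2τ.smul (β*m)) _).trans ?_
        exact EventuallyEq.add EventuallyEq.rfl (condExp_smul (β*m) _ _)
      filter_upwards [hc9, hc7, hc8, hkey, hRcond] with ω h1 h2 h3 h4 h5
      rw [h1]
      simp only [Pi.add_apply, Pi.smul_apply, smul_eq_mul]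
      rw [h2, h5]
      simp only [Pi.add_apply]
      rw [h3]
      have h6 : e ω * (P[discInt β qX η τ (fun _ => (0:ℝ))|hη.measurableSpace]) ω
          ≤ e ω * (β * m * (P[discInt β q η τ (fun _ => (0:ℝ))|hη.measurableSpace]) ω) :=
        mul_le_mul_of_nonneg_left h4 (he_pos ω).le
      nlinarith [h6]
    · -- the reward part is not integrable: the conditional expectation is zero
      have hnint : ¬ Integrable (fun ω => discInt β qX η τ cη ω
          + β * m * discInt β q τ (fun _ => (⊤:ℝ≥0∞)) cη ω) P := by
        intro hsum
        apply hA1i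
        have heq : (fun ω => (discInt β qX η τ cη ω
              + β * m * discInt β q τ (fun _ => (⊤:ℝ≥0∞)) cη ω)
            - β * m * discInt β q τ (fun _ => (⊤:ℝ≥0∞)) cη ω)
            = fun ω => discInt β qX η τ cη ω := by
          funext ω; ring
        rw [← heq]
        exact hsum.sub (hA2τ.const_mul (β*m))
      rw [condExp_of_not_integrable hnint]
      have hnn := condExp_nonneg (μ := P) (m := hη.measurableSpace)
        (f := discInt β q η (fun _ => (⊤:ℝ≥0∞)) cη) (ae_of_all _ hRnonneg)
      filter_upwards [hnn] with ω h
      simp only [Pi.zero_apply]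
      exact mul_nonneg (mul_nonneg hβ.le hm) h
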